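/- arXiv:1205.1758 — 3 statements merged into one kernel-verified Lean document; each statement's English description precedes it below -/
import Mathlib

section
/- For every k ∈ ℕ and γ ∈ (0,1], there exists a univariate real polynomial g of degree O(√k · log(1/γ)) such that g(0) = 0 and |g(x) − 1| ≤ γ for every x ∈ {1, 2, …, k}. -/
set_option maxHeartbeats 1000000

open Polynomial Polynomial.Chebyshev

lemma chebT_natDegree_le (n : ℕ) : (T ℝ (n : ℤ)).natDegree ≤ n := by
  induction n using Nat.strong_induction_on with
  | _ n ih =>
    match n with
    | 0 => simp [T_zero]
    | 1 => simpa [T_one] using natDegree_X_le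
    | (m+2) =>
      have h1 := ih (m+1) (by omega)
      have h0 := ih m (by omega)
      push_cast at h1 h0
      have : T ℝ ((m:ℤ)+2) = 2 * X * T ℝ ((m:ℤ)+1) - T ℝ m := T_add_two ℝ m
      push_cast
      rw [this]
      refine le_trans (natDegree_sub_le _ _) ?_
      refine max_le ?_ (by omega)
      refine le_trans (natDegree_mul_le) ?_
      have : (2 * X : ℝ[X]).natDegree ≤ 1 :=
        le_trans natDegree_mul_le (by simpa using natDegree_X_le)
      omega

lemma chebT_cosh (n : ℤ) (t : ℝ) :
    (T ℝ n).eval (Real.cosh t) = Real.cosh (n * t) := by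
  have h := Polynomial.Chebyshev.T_complex_cos ((t : ℂ) * Complex.I) n
  rw [Complex.cos_mul_I] at h
  have h2 : Complex.cos ((n : ℂ) * ((t:ℂ) * Complex.I)) = Complex.cosh ((n:ℂ) * t) := by
    rw [← mul_assoc, Complex.cos_mul_I]
  rw [h2] at h
  have h3 := Polynomial.Chebyshev.complex_ofReal_eval_T (Real.cosh t) n
  rw [Complex.ofReal_cosh] at h3
  rw [← h3] at h
  have h4 : ((n:ℂ) * (t:ℂ)) = ((n * t : ℝ) : ℂ) := by push_cast; ring
  rw [h4, ← Complex.ofReal_cosh] at h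
  exact_mod_cast h

lemma chebT_abs_le (n : ℤ) {y : ℝ} (hy : y ∈ Set.Icc (-1:ℝ) 1) :
    |(T ℝ n).eval y| ≤ 1 := by
  obtain ⟨θ, -, rfl⟩ := Real.surjOn_cos hy
  rw [Polynomial.Chebyshev.T_real_cos]
  exact Real.abs_cos_le_one _

/-- Chebyshev approximation of OR: there is a constant `C` such that for every `k ≥ 1` and
`γ ∈ (0, 1/2]` there is a univariate real polynomial `g` of degree at most
`C·√k·log(1/γ)` with `g(0) = 0` and `|g(x) - 1| ≤ γ` for all `x ∈ {1,…,k}`. -/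
theorem chebyshev_or_approx :
    ∃ C : ℝ, 0 < C ∧
      ∀ k : ℕ, 1 ≤ k → ∀ γ : ℝ, 0 < γ → γ ≤ 1 / 2 →
        ∃ g : Polynomial ℝ,
          (g.natDegree : ℝ) ≤ C * Real.sqrt k * Real.log (1 / γ) ∧
          g.eval 0 = 0 ∧
          ∀ x : ℕ, 1 ≤ x → x ≤ k → |g.eval (x : ℝ) - 1| ≤ γ := by
  refine ⟨10, by norm_num, ?_⟩
  intro k hk γ hγ hγ2
  have h2γ : (2:ℝ) ≤ 1/γ := by rw [le_div_iff₀ hγ]; linarith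
  have hlog2 : (0.6931471803:ℝ) < Real.log 2 := Real.log_two_gt_d9
  have hlogγ : Real.log 2 ≤ Real.log (1/γ) := Real.log_le_log (by norm_num) h2γ
  have hlogγ0 : 0 < Real.log (1/γ) := by linarith
  have hsK1 : 1 ≤ Real.sqrt k := by
    rw [show (1:ℝ) = Real.sqrt 1 by simp]
    exact Real.sqrt_le_sqrt (by exact_mod_cast hk)
  by_cases hk1 : k = 1
  · refine ⟨X, ?_, by simp, ?_⟩
    · simp only [natDegree_X, Nat.cast_one]
      subst hk1
      have : Real.sqrt 1 = 1 := by simp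
      push_cast
      rw [this]
      linarith
    · intro x hx1 hxk
      subst hk1
      interval_cases x
      norm_num
      linarith
  -- main case k ≥ 2
  have hk2 : 2 ≤ k := by omega
  set K : ℝ := (k : ℝ) with hK_def
  have hK : 2 ≤ K := by rw [hK_def]; exact_mod_cast hk2
  have hK1 : 0 < K - 1 := by linarith
  set sK : ℝ := Real.sqrt K with hsK_def
  have hsK : 1 ≤ sK := hsK1
  have hsK0 : 0 < sK := by linarith
  have hsK2 : sK ^ 2 = K := Real.sq_sqrt (by linarith)
  set u : ℝ := 2 / (K - 1) with hu_def
  have hu : 0 < u := by positivity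
  set c : ℝ := 1 + u with hc_def
  have hc : 1 < c := by linarith
  have hc2 : 0 ≤ c ^ 2 - 1 := by
    have h : c ^ 2 - 1 = (c - 1) * (c + 1) := by ring
    rw [h]; exact mul_nonneg (by linarith) (by linarith)
  set s : ℝ := c + Real.sqrt (c ^ 2 - 1) with hs_def
  have hsqnn : 0 ≤ Real.sqrt (c ^ 2 - 1) := Real.sqrt_nonneg _
  have hs1 : 1 < s := by rw [hs_def]; linarith
  have hs0 : 0 < s := by linarith
  set t : ℝ := Real.log s with ht_def
  have ht0 : 0 < t := Real.log_pos hs1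
  have hsqrt_sq : Real.sqrt (c ^ 2 - 1) ^ 2 = c ^ 2 - 1 := Real.sq_sqrt hc2
  have hsinv : s⁻¹ = c - Real.sqrt (c ^ 2 - 1) := by
    have hmul : s * (c - Real.sqrt (c ^ 2 - 1)) = 1 := by
      rw [hs_def]; linear_combination -hsqrt_sq
    exact inv_eq_of_mul_eq_one_right hmul
  have hcosh : Real.cosh t = c := by
    rw [ht_def, Real.cosh_log hs0, hsinv, hs_def]; ring
  -- lower bound on t
  have h2u : 2 * u = 4 / (K - 1) := by rw [hu_def]; ring
  set a : ℝ := Real.sqrt (2 * u) with ha_def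
  have ha0 : 0 ≤ a := Real.sqrt_nonneg _
  have ha2 : a ^ 2 = 2 * u := Real.sq_sqrt (by positivity)
  set b : ℝ := 2 / sK with hb_def
  have hb0 : 0 < b := by positivity
  have hbsq : Real.sqrt (4 / K) = b := by
    rw [show (4:ℝ)/K = b^2 by rw [hb_def]; field_simp [← hsK2]; rw [hsK2]; ring, hb_def]
    exact Real.sqrt_sq (by positivity)
  have hba : b ≤ a := by
    rw [← hbsq, ha_def]
    apply Real.sqrt_le_sqrt
    rw [h2u]
    apply div_le_div_of_nonneg_left (by norm_num) hK1
    linarith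
  have hs_ge : 1 + a ≤ s := by
    rw [hs_def, ha_def]
    have : Real.sqrt (2 * u) ≤ Real.sqrt (c ^ 2 - 1) := by
      apply Real.sqrt_le_sqrt
      have h : c ^ 2 - 1 = 2 * u + u ^ 2 := by rw [hc_def]; ring
      rw [h]; nlinarith [sq_nonneg u]
    linarith
  have hlog_lb : a / (1 + a) ≤ t := by
    have h1a : (0:ℝ) < 1 + a := by linarith
    have hy1 : a / (1 + a) < 1 := by rw [div_lt_one h1a]; linarith
    have hexp : Real.exp (a / (1 + a)) ≤ 1 + a := by
      have h5 := Real.add_one_le_exp (-(a / (1 + a)))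
      have h6 : (1 - a / (1 + a)) * Real.exp (a / (1 + a)) ≤ 1 := by
        have := Real.exp_pos (a / (1 + a))
        calc (1 - a / (1 + a)) * Real.exp (a / (1 + a))
            ≤ Real.exp (-(a / (1 + a))) * Real.exp (a / (1 + a)) :=
              mul_le_mul_of_nonneg_right (by linarith) (Real.exp_pos _).le
          _ = 1 := by rw [← Real.exp_add]; simp
      have h7 : 1 - a / (1 + a) = 1 / (1 + a) := by field_simp; ring
      rw [h7] at h6
      have := Real.exp_pos (a / (1+a))
      rw [div_mul_eq_mul_div, div_le_one h1a] at h6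
      linarith
    have := Real.log_le_log (Real.exp_pos _) hexp
    rw [Real.log_exp] at this
    calc a / (1 + a) ≤ Real.log (1 + a) := this
      _ ≤ t := Real.log_le_log (by linarith) hs_ge
  have ht_lb : 2 / (3 * sK) ≤ t := by
    have h1 : b / (1 + b) ≤ a / (1 + a) := by
      rw [div_le_div_iff₀ (by linarith) (by linarith)]
      have h : b * (1 + a) - a * (1 + b) = b - a := by ring
      linarith
    have h2 : b / (1 + b) = 2 / (sK + 2) := by
      rw [hb_def]; field_simp
    have h3 : 2 / (3 * sK) ≤ 2 / (sK + 2) := by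
      apply div_le_div_of_nonneg_left (by norm_num) (by linarith)
      linarith
    linarith [h3, h2 ▸ h1]
  -- choose degree
  have hlog2γ0 : 0 < Real.log (2 / γ) := Real.log_pos (by rw [lt_div_iff₀ hγ]; linarith)
  set d : ℕ := ⌈(3/2 : ℝ) * sK * Real.log (2 / γ)⌉₊ with hd_def
  have hd_ge : (3/2 : ℝ) * sK * Real.log (2 / γ) ≤ d := Nat.le_ceil _
  have hdt : Real.log (2 / γ) ≤ (d : ℝ) * t := by
    calc Real.log (2 / γ) = ((3/2 : ℝ) * sK * Real.log (2 / γ)) * (2 / (3 * sK)) := by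
          field_simp
      _ ≤ (d : ℝ) * t := by
          apply mul_le_mul hd_ge ht_lb (by positivity) (by positivity)
  set T0 : ℝ := (T ℝ (d : ℤ)).eval c with hT0_def
  have hT0_eq : T0 = Real.cosh ((d : ℝ) * t) := by
    rw [hT0_def, ← hcosh, chebT_cosh]
    norm_num
  have hT0_ge : 1 / γ ≤ T0 := by
    rw [hT0_eq, Real.cosh_eq]
    have hexp : 2 / γ ≤ Real.exp ((d:ℝ) * t) := by
      calc 2 / γ = Real.exp (Real.log (2/γ)) := (Real.exp_log (by positivity)).symm
        _ ≤ Real.exp ((d:ℝ) * t) := Real.exp_le_exp.2 hdt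
    have h9 := Real.exp_pos (-((d:ℝ) * t))
    have h10 : 1 / γ = (2 / γ) / 2 := by ring
    linarith
  have hT0_pos : 0 < T0 := lt_of_lt_of_le (by positivity) hT0_ge
  -- the polynomial
  set q : ℝ[X] := Polynomial.C c - Polynomial.C u * Polynomial.X with hq_def
  refine ⟨1 - Polynomial.C T0⁻¹ * (T ℝ (d : ℤ)).comp q, ?_, ?_, ?_⟩
  · -- degree bound
    have hdeg : (1 - Polynomial.C T0⁻¹ * (T ℝ (d : ℤ)).comp q).natDegree ≤ d := by
      refine le_trans (natDegree_sub_le _ _) (max_le (by simp) ?_)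
      refine le_trans (natDegree_C_mul_le _ _) ?_
      refine le_trans (natDegree_comp_le) ?_
      have hq1 : q.natDegree ≤ 1 := by
        rw [hq_def]
        refine le_trans (natDegree_sub_le _ _) (max_le (by simp) ?_)
        exact le_trans (natDegree_C_mul_le _ _) natDegree_X_le
      have := chebT_natDegree_le d
      calc (T ℝ (d:ℤ)).natDegree * q.natDegree ≤ d * 1 := Nat.mul_le_mul this hq1
        _ = d := by ring
    have hd_lt : (d : ℝ) < (3/2 : ℝ) * sK * Real.log (2 / γ) + 1 :=
      Nat.ceil_lt_add_one (by positivity)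
    have hlogsplit : Real.log (2 / γ) = Real.log 2 + Real.log (1 / γ) := by
      rw [show (2:ℝ)/γ = 2 * (1/γ) by ring, Real.log_mul (by norm_num) (by positivity)]
    have h1le : (1:ℝ) ≤ 2 * sK * Real.log (1/γ) := by
      have e1 : Real.log (1/γ) ≤ sK * Real.log (1/γ) :=
        le_mul_of_one_le_left hlogγ0.le hsK
      linarith
    have : (d : ℝ) ≤ 10 * sK * Real.log (1/γ) := by
      rw [hlogsplit] at hd_lt
      have e2 : (3/2) * sK * Real.log 2 ≤ (3/2) * sK * Real.log (1/γ) :=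
        mul_le_mul_of_nonneg_left hlogγ (by positivity)
      have e3 : (3/2 : ℝ) * sK * (Real.log 2 + Real.log (1/γ))
          = (3/2) * sK * Real.log 2 + (3/2) * sK * Real.log (1/γ) := by ring
      linarith
    calc ((1 - Polynomial.C T0⁻¹ * (T ℝ (d : ℤ)).comp q).natDegree : ℝ) ≤ (d:ℝ) := by
          exact_mod_cast hdeg
      _ ≤ 10 * sK * Real.log (1/γ) := this
      _ = 10 * Real.sqrt k * Real.log (1/γ) := by rw [hsK_def]
  · -- eval at 0
    have hq0 : q.eval 0 = c := by simp [hq_def]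
    simp only [eval_sub, eval_one, eval_mul, eval_C, eval_comp, hq0, ← hT0_def]
    rw [inv_mul_cancel₀ (ne_of_gt hT0_pos)]
    ring
  · -- approximation on {1,...,k}
    intro x hx1 hxk
    have hx1' : (1:ℝ) ≤ (x:ℝ) := by exact_mod_cast hx1
    have hxk' : (x:ℝ) ≤ K := by rw [hK_def]; exact_mod_cast hxk
    have hqx : q.eval (x:ℝ) = c - u * x := by simp [hq_def]
    have hmem : c - u * (x:ℝ) ∈ Set.Icc (-1:ℝ) 1 := by
      constructor
      · have hcuK : c - u * K = -1 := by rw [hc_def, hu_def]; field_simp; ring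
        have h11 := mul_le_mul_of_nonneg_left hxk' hu.le
        linarith only [hcuK, h11]
      · have h12 := le_mul_of_one_le_right hu.le hx1'
        linarith only [hc_def, h12]
    have habs := chebT_abs_le (d : ℤ) hmem
    have hinv : T0⁻¹ ≤ γ := by
      rw [show γ = (1/γ)⁻¹ by field_simp]
      exact inv_anti₀ (by positivity) hT0_ge
    simp only [eval_sub, eval_one, eval_mul, eval_C, eval_comp, hqx]
    rw [show (1 : ℝ) - T0⁻¹ * (T ℝ (d:ℤ)).eval (c - u * x) - 1
        = -(T0⁻¹ * (T ℝ (d:ℤ)).eval (c - u * x)) by ring, abs_neg, abs_mul,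
      abs_of_pos (inv_pos.2 hT0_pos)]
    calc T0⁻¹ * |(T ℝ (d:ℤ)).eval (c - u * x)| ≤ T0⁻¹ * 1 := by
          apply mul_le_mul_of_nonneg_left habs (le_of_lt (inv_pos.2 hT0_pos))
      _ = T0⁻¹ := by ring
      _ ≤ γ := hinv
end

section
/- Let h : ℝ → ℝ be a polynomial with h(k) = 1 and |h(s)| ≤ γ/k for all s ∈ {0,1,…,k−1}, where k ≥ 1. Let f be the length-k decision list with branch variables y₁,…,y_k and outputs b₁,…,b_{k+1} ∈ {0,1}. Then the polynomial p(y) = ∑_{i=1}^{k} b_i · h((1−y₁)+⋯+(1−y_{i−1}) + y_i + (k−i)) + b_{k+1} · h((1−y₁)+⋯+(1−y_k)) satisfies |p(y) − f(y)| ≤ γ for every y ∈ {0,1}^m. -/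
open scoped Classical

/-- If `h(k) = 1` and `|h(s)| ≤ γ/k` for `s ∈ {0,…,k-1}`, then the polynomial
`p(y) = ∑_{i<k} b_i h((∑_{j<i}(1-y_j)) + y_i + (k-i-1)) + b_k h(∑_{j<k}(1-y_j))`
approximates the length-`k` decision list with outputs `b₀,…,b_k` to within `γ`
on every Boolean input. -/
theorem decision_list_approx (m k : ℕ) (hk : 1 ≤ k) (hkm : k ≤ m)
    (γ : ℝ) (hγ : 0 < γ) (h : Polynomial ℝ)
    (hk1 : h.eval (k : ℝ) = 1)
    (hsmall : ∀ s : ℕ, s < k → |h.eval (s : ℝ)| ≤ γ / k)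
    (b : ℕ → ℝ) (hb : ∀ i, b i = 0 ∨ b i = 1) (y : ℕ → Bool) :
    |(∑ i ∈ Finset.range k,
        b i * h.eval ((∑ j ∈ Finset.range i, (1 - (if y j then (1 : ℝ) else 0)))
          + (if y i then (1 : ℝ) else 0) + ((k - (i + 1) : ℕ) : ℝ))
      + b k * h.eval (∑ j ∈ Finset.range k, (1 - (if y j then (1 : ℝ) else 0))))
      - (if hex : ∃ i, i < k ∧ y i = true then b (Nat.find hex) else b k)| ≤ γ := by
  classical
  have hb1 : ∀ i, |b i| ≤ 1 := by intro i; rcases hb i with hi | hi <;> simp [hi]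
  have hk0 : (0:ℝ) < (k:ℝ) := by exact_mod_cast hk
  set c : ℕ → ℕ := fun i => ∑ j ∈ Finset.range i, (if y j = true then 0 else 1) with hcdef
  set n : ℕ → ℕ := fun i => c i + (if y i = true then 1 else 0) + (k - (i+1)) with hndef
  have hcast1 : ∀ i : ℕ,
      (∑ j ∈ Finset.range i, (1 - (if y j then (1:ℝ) else 0))) = (c i : ℝ) := by
    intro i
    rw [hcdef]
    push_cast
    refine Finset.sum_congr rfl fun j _ => ?_
    by_cases hj : y j <;> simp [hj]
  have hcast2 : ∀ i : ℕ,
      (c i : ℝ) + (if y i then (1:ℝ) else 0) + ((k - (i+1) : ℕ) : ℝ) = (n i : ℝ) := by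
    intro i
    rw [hndef]
    push_cast
    by_cases hi : y i <;> simp [hi]
  have hcle : ∀ i, c i ≤ i := by
    intro i
    rw [hcdef]
    calc ∑ j ∈ Finset.range i, (if y j = true then 0 else 1)
        ≤ ∑ _j ∈ Finset.range i, 1 :=
          Finset.sum_le_sum (fun j _ => by split <;> omega)
      _ = i := by simp
  have hcsub : ∀ i j₀, j₀ < i → y j₀ = true → c i ≤ i - 1 := by
    intro i j₀ hj₀ hyj₀
    have hmem : j₀ ∈ Finset.range i := Finset.mem_range.mpr hj₀
    have h1 : c i = ∑ j ∈ (Finset.range i).erase j₀, (if y j = true then 0 else 1) := by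
      rw [hcdef]
      exact (Finset.sum_erase _ (by simp [hyj₀])).symm
    have h2 : ∑ j ∈ (Finset.range i).erase j₀, (if y j = true then 0 else 1)
        ≤ ∑ _j ∈ (Finset.range i).erase j₀, 1 :=
      Finset.sum_le_sum (fun j _ => by split <;> omega)
    have h3 : ((Finset.range i).erase j₀).card = i - 1 := by
      rw [Finset.card_erase_of_mem hmem, Finset.card_range]
    calc c i ≤ ∑ _j ∈ (Finset.range i).erase j₀, 1 := h1 ▸ h2
      _ = i - 1 := by rw [Finset.sum_const, h3]; simp
  have hcall : ∀ i, (∀ j, j < i → y j = false) → c i = i := by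
    intro i hall
    rw [hcdef]
    calc ∑ j ∈ Finset.range i, (if y j = true then 0 else 1)
        = ∑ _j ∈ Finset.range i, 1 := Finset.sum_congr rfl (fun j hj => by
          simp [hall j (Finset.mem_range.mp hj)])
      _ = i := by simp
  -- n i < k for non-firing branches
  have hlt : ∀ i, i < k → (y i = false ∨ ∃ j, j < i ∧ y j = true) → n i < k := by
    intro i hik hcase
    rw [hndef]
    rcases hcase with hyi | ⟨j₀, hj₀, hyj₀⟩
    · have := hcle i
      simp only [hyi, Bool.false_eq_true, if_false]
      omega
    · have hci := hcsub i j₀ hj₀ hyj₀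
      by_cases hyi : y i = true
      · simp only [hyi, if_true]
        omega
      · simp only [hyi, Bool.false_eq_true, if_false]
        omega
  have hbound : ∀ i, n i < k → |b i * h.eval ((n i : ℝ))| ≤ γ / k := by
    intro i hi
    rw [abs_mul]
    calc |b i| * |h.eval ((n i : ℝ))| ≤ 1 * (γ / k) :=
        mul_le_mul (hb1 i) (hsmall _ hi) (abs_nonneg _) zero_le_one
      _ = γ / k := one_mul _
  rw [show (∑ i ∈ Finset.range k,
        b i * h.eval ((∑ j ∈ Finset.range i, (1 - (if y j then (1 : ℝ) else 0)))
          + (if y i then (1 : ℝ) else 0) + ((k - (i + 1) : ℕ) : ℝ)))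
      = ∑ i ∈ Finset.range k, b i * h.eval ((n i : ℝ)) from
    Finset.sum_congr rfl fun i _ => by rw [hcast1, hcast2], hcast1 k]
  by_cases hex : ∃ i, i < k ∧ y i = true
  · rw [dif_pos hex]
    set i₀ := Nat.find hex with hi₀def
    obtain ⟨hi₀k, hyi₀⟩ : i₀ < k ∧ y i₀ = true := Nat.find_spec hex
    have hmin : ∀ j, j < i₀ → y j = false := by
      intro j hj
      have := Nat.find_min hex hj
      have hjk : j < k := lt_trans hj hi₀k
      by_contra hc
      exact this ⟨hjk, by simpa using hc⟩
    have hni₀ : n i₀ = k := by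
      rw [hndef]
      simp only [hyi₀, if_pos]
      rw [hcall i₀ hmin]
      omega
    have hterm : b i₀ * h.eval ((n i₀ : ℝ)) = b i₀ := by
      rw [hni₀, hk1, mul_one]
    have hmem : i₀ ∈ Finset.range k := Finset.mem_range.mpr hi₀k
    rw [← Finset.sum_erase_add _ _ hmem, hterm]
    have hEq : (∑ i ∈ (Finset.range k).erase i₀, b i * h.eval ((n i : ℝ)) + b i₀
        + b k * h.eval ((c k : ℝ))) - b i₀
        = ∑ i ∈ (Finset.range k).erase i₀, b i * h.eval ((n i : ℝ))
          + b k * h.eval ((c k : ℝ)) := by ring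
    rw [hEq]
    have hckk : c k < k := by
      have := hcsub k i₀ hi₀k hyi₀
      omega
    have hsum : |∑ i ∈ (Finset.range k).erase i₀, b i * h.eval ((n i : ℝ))|
        ≤ ((k - 1 : ℕ) : ℝ) * (γ / k) := by
      refine le_trans (Finset.abs_sum_le_sum_abs _ _) ?_
      calc ∑ i ∈ (Finset.range k).erase i₀, |b i * h.eval ((n i : ℝ))|
          ≤ ∑ _i ∈ (Finset.range k).erase i₀, (γ / k) := by
            refine Finset.sum_le_sum (fun i hi => ?_)
            obtain ⟨hne, hirange⟩ := Finset.mem_erase.mp hi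
            have hik : i < k := Finset.mem_range.mp hirange
            refine hbound i (hlt i hik ?_)
            rcases lt_or_gt_of_ne hne with hlt' | hgt
            · exact Or.inl (hmin i hlt')
            · exact Or.inr ⟨i₀, hgt, hyi₀⟩
        _ = ((k - 1 : ℕ) : ℝ) * (γ / k) := by
            rw [Finset.sum_const, Finset.card_erase_of_mem hmem, Finset.card_range]
            simp [nsmul_eq_mul]
    have hlast : |b k * h.eval ((c k : ℝ))| ≤ γ / k := by
      rw [abs_mul]
      calc |b k| * |h.eval ((c k : ℝ))| ≤ 1 * (γ / k) :=
          mul_le_mul (hb1 k) (hsmall _ hckk) (abs_nonneg _) zero_le_one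
        _ = γ / k := one_mul _
    calc |∑ i ∈ (Finset.range k).erase i₀, b i * h.eval ((n i : ℝ))
          + b k * h.eval ((c k : ℝ))|
        ≤ |∑ i ∈ (Finset.range k).erase i₀, b i * h.eval ((n i : ℝ))|
          + |b k * h.eval ((c k : ℝ))| := abs_add_le _ _
      _ ≤ ((k - 1 : ℕ) : ℝ) * (γ / k) + γ / k := add_le_add hsum hlast
      _ = γ := by
          have hcast : ((k - 1 : ℕ) : ℝ) = (k : ℝ) - 1 := by
            have : (1:ℕ) ≤ k := hk
            push_cast [this]
            ring
          rw [hcast]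
          field_simp
          ring
  · rw [dif_neg hex]
    push_neg at hex
    have hall : ∀ j, j < k → y j = false := by
      intro j hj
      have := hex j
      by_contra hc
      exact absurd (by simpa using hc) (fun h' => (this hj) h')
    have hck : c k = k := hcall k hall
    have hlast : b k * h.eval ((c k : ℝ)) = b k := by rw [hck, hk1, mul_one]
    rw [hlast]
    have hEq : (∑ i ∈ Finset.range k, b i * h.eval ((n i : ℝ)) + b k) - b k
        = ∑ i ∈ Finset.range k, b i * h.eval ((n i : ℝ)) := by ring
    rw [hEq]
    refine le_trans (Finset.abs_sum_le_sum_abs _ _) ?_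
    calc ∑ i ∈ Finset.range k, |b i * h.eval ((n i : ℝ))|
        ≤ ∑ _i ∈ Finset.range k, (γ / k) := by
          refine Finset.sum_le_sum (fun i hi => ?_)
          have hik : i < k := Finset.mem_range.mp hi
          exact hbound i (hlt i hik (Or.inl (hall i hik)))
      _ = (k : ℝ) * (γ / k) := by rw [Finset.sum_const, Finset.card_range]; simp [nsmul_eq_mul]
      _ = γ := by field_simp
end

section
/- Let f : X^n → ℝ^N be a function such that for all pairs of databases D, D' ∈ X^n differing in one coordinate, ‖f(D) − f(D')‖₁ ≤ Δ. Then the mechanism A(D) = f(D) + Z, where Z has N i.i.d. Laplace(Δ/ε) coordinates, is ε-differentially private: for all such adjacent D, D' and all measurable S ⊆ ℝ^N, P(A(D) ∈ S) ≤ e^{ε}·P(A(D') ∈ S). -/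
open MeasureTheory

/-- The Laplace distribution with scale `σ`: density `(1/(2σ))·exp(-|x|/σ)` w.r.t. Lebesgue. -/
noncomputable def laplaceMeasure (σ : ℝ) : Measure ℝ :=
  volume.withDensity (fun x => ENNReal.ofReal ((1 / (2 * σ)) * Real.exp (-|x| / σ)))

namespace LaplaceAux

/-- The real density of the Laplace distribution. -/
noncomputable def dens (σ t : ℝ) : ℝ :=
  (1 / (2 * σ)) * Real.exp (-|t| / σ)

lemma dens_nonneg {σ : ℝ} (hσ : 0 < σ) (t : ℝ) : 0 ≤ dens σ t := by
  unfold dens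
  positivity

lemma dens_meas (σ : ℝ) : Measurable fun t => ENNReal.ofReal (dens σ t) := by
  unfold dens
  fun_prop

/-- Tonelli for a product of one-variable functions over a finite product of Lebesgue measures. -/
lemma lintegral_fin_prod : ∀ {n : ℕ} (g : Fin n → ℝ → ENNReal), (∀ i, Measurable (g i)) →
    ∫⁻ x, ∏ i, g i (x i) ∂(Measure.pi fun _ : Fin n => (volume : Measure ℝ))
      = ∏ i, ∫⁻ t, g i t := by
  intro n
  induction n with
  | zero =>
    intro g hg
    simp [Measure.pi_of_empty (fun _ : Fin 0 => (volume : Measure ℝ))]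
  | succ n ih =>
    intro g hg
    have hmp := measurePreserving_piFinSuccAbove (fun _ : Fin (n + 1) => (volume : Measure ℝ)) 0
    have hGmeas : Measurable fun p : ℝ × (Fin n → ℝ) =>
        g 0 p.1 * ∏ i : Fin n, g i.succ (p.2 i) := by
      apply Measurable.mul
      · exact (hg 0).comp measurable_fst
      · exact Finset.measurable_prod _ fun i _ =>
          (hg i.succ).comp ((measurable_pi_apply i).comp measurable_snd)
    have hcomp : ∀ x : Fin (n + 1) → ℝ,
        (fun p : ℝ × (Fin n → ℝ) => g 0 p.1 * ∏ i : Fin n, g i.succ (p.2 i))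
          (MeasurableEquiv.piFinSuccAbove (fun _ => ℝ) 0 x) = ∏ i, g i (x i) := by
      intro x
      rw [Fin.prod_univ_succ]
      simp [MeasurableEquiv.piFinSuccAbove, Fin.zero_succAbove, Fin.tail]
    calc ∫⁻ x, ∏ i, g i (x i) ∂(Measure.pi fun _ : Fin (n + 1) => (volume : Measure ℝ))
        = ∫⁻ p : ℝ × (Fin n → ℝ), g 0 p.1 * ∏ i : Fin n, g i.succ (p.2 i)
            ∂((volume : Measure ℝ).prod (Measure.pi fun _ : Fin n => (volume : Measure ℝ))) := by
          rw [← hmp.lintegral_comp hGmeas]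
          exact lintegral_congr fun x => (hcomp x).symm
      _ = (∫⁻ t, g 0 t) * ∫⁻ y, ∏ i : Fin n, g i.succ (y i)
            ∂(Measure.pi fun _ : Fin n => (volume : Measure ℝ)) :=
          lintegral_prod_mul (hg 0).aemeasurable
            (Finset.measurable_prod Finset.univ fun (i : Fin n) _ =>
              (hg (Fin.succ i)).comp (measurable_pi_apply i)).aemeasurable
      _ = ∏ i, ∫⁻ t, g i t := by
          rw [ih (fun i => g i.succ) (fun i => hg i.succ), Fin.prod_univ_succ]

instance (σ : ℝ) : SigmaFinite (laplaceMeasure σ) := by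
  unfold laplaceMeasure; infer_instance

lemma pi_laplace {σ : ℝ} (N : ℕ) :
    Measure.pi (fun _ : Fin N => laplaceMeasure σ)
      = (Measure.pi fun _ : Fin N => (volume : Measure ℝ)).withDensity
          (fun x => ∏ i, ENNReal.ofReal (dens σ (x i))) := by
  refine Measure.pi_eq (μ := fun _ : Fin N => laplaceMeasure σ) fun s hs => ?_
  rw [withDensity_apply _ (MeasurableSet.univ_pi hs),
    ← lintegral_indicator (MeasurableSet.univ_pi hs)]
  have hpt : ∀ x : Fin N → ℝ,
      (Set.pi Set.univ s).indicator (fun x => ∏ i, ENNReal.ofReal (dens σ (x i))) x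
        = ∏ i, (s i).indicator (fun t => ENNReal.ofReal (dens σ t)) (x i) := by
    intro x
    by_cases hx : x ∈ Set.pi Set.univ s
    · rw [Set.indicator_of_mem hx]
      exact Finset.prod_congr rfl fun i _ =>
        (Set.indicator_of_mem (hx i (Set.mem_univ i)) (fun t => ENNReal.ofReal (dens σ t))).symm
    · rw [Set.indicator_of_notMem hx]
      obtain ⟨i, hi⟩ : ∃ i, x i ∉ s i := by
        by_contra h
        push_neg at h
        exact hx fun i _ => h i
      exact (Finset.prod_eq_zero (Finset.mem_univ i)
        (Set.indicator_of_notMem hi (fun t => ENNReal.ofReal (dens σ t)))).symm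
  rw [lintegral_congr hpt,
    lintegral_fin_prod _ (fun i => (dens_meas σ).indicator (hs i))]
  refine Finset.prod_congr rfl fun i _ => ?_
  rw [lintegral_indicator (hs i)]
  rw [laplaceMeasure, withDensity_apply _ (hs i)]
  rfl

end LaplaceAux

open LaplaceAux in
/-- The Laplace mechanism: if `f` has `L₁`-sensitivity `Δ` over databases differing in one
coordinate, then adding i.i.d. Laplace(Δ/ε) noise to each coordinate of `f` is
`ε`-differentially private. -/
theorem laplace_mechanism_private {X : Type*} [Fintype X] (n N : ℕ)
    (Δ ε : ℝ) (hΔ : 0 < Δ) (hε : 0 < ε)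
    (f : (Fin n → X) → (Fin N → ℝ))
    (hsens : ∀ D D' : Fin n → X, (∃ i, ∀ j, j ≠ i → D j = D' j) →
      ∑ i, |f D i - f D' i| ≤ Δ) :
    ∀ D D' : Fin n → X, (∃ i, ∀ j, j ≠ i → D j = D' j) →
      ∀ S : Set (Fin N → ℝ), MeasurableSet S →
        (Measure.map (fun z => f D + z)
            (Measure.pi (fun _ : Fin N => laplaceMeasure (Δ / ε)))) S
          ≤ ENNReal.ofReal (Real.exp ε) *
            (Measure.map (fun z => f D' + z)
              (Measure.pi (fun _ : Fin N => laplaceMeasure (Δ / ε)))) S := by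
  intro D D' hadj S hS
  set σ : ℝ := Δ / ε with hσdef
  have hσ : 0 < σ := div_pos hΔ hε
  -- compute the mapped measures as integrals of shifted densities
  have key : ∀ c : Fin N → ℝ,
      (Measure.map (fun z => c + z)
          (Measure.pi (fun _ : Fin N => laplaceMeasure σ))) S
        = ∫⁻ y in S, ∏ i, ENNReal.ofReal (dens σ (y i - c i)) ∂(volume : Measure (Fin N → ℝ)) := by
    intro c
    have hGmeas : Measurable fun x : Fin N → ℝ => ∏ i, ENNReal.ofReal (dens σ (x i)) :=
      Finset.measurable_prod _ fun i _ => (dens_meas σ).comp (measurable_pi_apply i)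
    have hadd : Measurable fun z : Fin N → ℝ => c + z := measurable_const_add c
    rw [pi_laplace (σ := σ) N, ← volume_pi, Measure.map_apply hadd hS,
      withDensity_apply _ (hS.preimage hadd)]
    have hmp : MeasurePreserving (fun z : Fin N → ℝ => c + z)
        (volume : Measure (Fin N → ℝ)) (volume : Measure (Fin N → ℝ)) :=
      measurePreserving_add_left _ c
    have hemb : MeasurableEmbedding (fun z : Fin N → ℝ => c + z) :=
      (MeasurableEquiv.addLeft c).measurableEmbedding
    have := hmp.setLIntegral_comp_preimage_emb hemb
      (fun y => ∏ i, ENNReal.ofReal (dens σ (y i - c i))) S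
    rw [← this]
    refine setLIntegral_congr_fun (hS.preimage hadd) (fun x _ => ?_)
    refine Finset.prod_congr rfl fun i _ => ?_
    simp
  rw [key (f D), key (f D')]
  -- pointwise density ratio bound
  have hsum : ∑ i, |f D i - f D' i| ≤ Δ := hsens D D' hadj
  have hpt : ∀ y : Fin N → ℝ,
      ∏ i, ENNReal.ofReal (dens σ (y i - f D i))
        ≤ ENNReal.ofReal (Real.exp ε) * ∏ i, ENNReal.ofReal (dens σ (y i - f D' i)) := by
    intro y
    rw [← ENNReal.ofReal_prod_of_nonneg (fun i _ => dens_nonneg hσ _),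
      ← ENNReal.ofReal_prod_of_nonneg (fun i _ => dens_nonneg hσ _),
      ← ENNReal.ofReal_mul (Real.exp_nonneg ε)]
    apply ENNReal.ofReal_le_ofReal
    unfold dens
    rw [Finset.prod_mul_distrib, Finset.prod_mul_distrib, ← Real.exp_sum, ← Real.exp_sum]
    rw [mul_comm (Real.exp ε), mul_assoc, ← Real.exp_add]
    apply mul_le_mul_of_nonneg_left _ (by positivity)
    apply Real.exp_le_exp.mpr
    have hdiff : ∑ i, |y i - f D' i| - ∑ i, |y i - f D i| ≤ Δ := by
      rw [← Finset.sum_sub_distrib]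
      calc ∑ i, (|y i - f D' i| - |y i - f D i|)
          ≤ ∑ i, |f D i - f D' i| := by
            apply Finset.sum_le_sum
            intro i _
            have h := abs_sub_abs_le_abs_sub (y i - f D' i) (y i - f D i)
            have h2 : (y i - f D' i) - (y i - f D i) = f D i - f D' i := by ring
            rwa [h2] at h
        _ ≤ Δ := hsum
    have hεσ : ε * σ = Δ := by
      rw [hσdef]; field_simp
    have hA : ∑ i, -|y i - f D i| / σ = -((∑ i, |y i - f D i|) / σ) := by
      rw [← Finset.sum_div, Finset.sum_neg_distrib, neg_div]
    have hB : ∑ i, -|y i - f D' i| / σ = -((∑ i, |y i - f D' i|) / σ) := by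
      rw [← Finset.sum_div, Finset.sum_neg_distrib, neg_div]
    have h2 : (∑ i, |y i - f D' i|) / σ - (∑ i, |y i - f D i|) / σ ≤ ε := by
      rw [← sub_div, div_le_iff₀ hσ]
      linarith [hεσ]
    rw [hA, hB]
    linarith
  calc ∫⁻ y in S, ∏ i, ENNReal.ofReal (dens σ (y i - f D i)) ∂(volume : Measure (Fin N → ℝ))
      ≤ ∫⁻ y in S, ENNReal.ofReal (Real.exp ε) *
          ∏ i, ENNReal.ofReal (dens σ (y i - f D' i)) ∂(volume : Measure (Fin N → ℝ)) :=
        lintegral_mono fun y => hpt y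
    _ = ENNReal.ofReal (Real.exp ε) *
          ∫⁻ y in S, ∏ i, ENNReal.ofReal (dens σ (y i - f D' i))
            ∂(volume : Measure (Fin N → ℝ)) := by
        rw [lintegral_const_mul (f := fun y : Fin N → ℝ =>
            ∏ i, ENNReal.ofReal (dens σ (y i - f D' i))) _
          (Finset.measurable_prod Finset.univ fun (i : Fin N) _ =>
            (dens_meas σ).comp ((measurable_pi_apply i).sub measurable_const))]
end
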